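/- Let v, w ∈ ℝ^d with |v| = |w| ≠ 0. Then there exists a linear isometry R : ℝ^d → ℝ^d such that Rv = w and |Rx − x| ≤ (|v − w|/|v|) |x| for every x ∈ ℝ^d; in particular, for every r > 0, sup_{|x| ≤ r} |Rx − x| ≤ r |v − w|/|v|. -/

import Mathlib

open Metric
open RealInnerProductSpace

private lemma rot_exists {E : Type*} [NormedAddCommGroup E] [InnerProductSpace ℝ E]
    (e f : E) (he : ‖e‖ = 1) (hf : ‖f‖ = 1) (hef : ⟪e, f⟫ = 0)
    (c s : ℝ) (hcs : c ^ 2 + s ^ 2 = 1) :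
    ∃ R : E →ₗᵢ[ℝ] E, ∀ x, R x =
      x + ((c - 1) * ⟪e, x⟫ - s * ⟪f, x⟫) • e + (s * ⟪e, x⟫ + (c - 1) * ⟪f, x⟫) • f := by
  have hee : ⟪e, e⟫ = 1 := by rw [real_inner_self_eq_norm_sq, he]; norm_num
  have hff : ⟪f, f⟫ = 1 := by rw [real_inner_self_eq_norm_sq, hf]; norm_num
  have hfe : ⟪f, e⟫ = 0 := by rw [real_inner_comm]; exact hef
  refine ⟨⟨⟨⟨fun x => x + ((c - 1) * ⟪e, x⟫ - s * ⟪f, x⟫) • e +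
      (s * ⟪e, x⟫ + (c - 1) * ⟪f, x⟫) • f, ?_⟩, ?_⟩, ?_⟩, fun x => rfl⟩
  · intro x y
    simp only [inner_add_right]
    module
  · intro r x
    simp only [inner_smul_right, RingHom.id_apply]
    module
  · intro x
    show ‖x + ((c - 1) * ⟪e, x⟫ - s * ⟪f, x⟫) • e + (s * ⟪e, x⟫ + (c - 1) * ⟪f, x⟫) • f‖ = ‖x‖
    have h2 : ⟪x + ((c - 1) * ⟪e, x⟫ - s * ⟪f, x⟫) • e +
        (s * ⟪e, x⟫ + (c - 1) * ⟪f, x⟫) • f,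
        x + ((c - 1) * ⟪e, x⟫ - s * ⟪f, x⟫) • e +
        (s * ⟪e, x⟫ + (c - 1) * ⟪f, x⟫) • f⟫ = ⟪x, x⟫ := by
      simp only [inner_add_left, inner_add_right, real_inner_smul_left, real_inner_smul_right,
        hee, hff, hef, hfe]
      simp only [real_inner_comm e x, real_inner_comm f x]
      linear_combination (⟪e, x⟫ ^ 2 + ⟪f, x⟫ ^ 2) * hcs
    have h3 := h2
    rw [real_inner_self_eq_norm_sq, real_inner_self_eq_norm_sq] at h3
    calc ‖_‖ = Real.sqrt (_ ^ 2) := (Real.sqrt_sq (norm_nonneg _)).symm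
    _ = Real.sqrt (‖x‖ ^ 2) := by rw [h3]
    _ = ‖x‖ := Real.sqrt_sq (norm_nonneg _)

/-- Let `v, w ∈ ℝ^d` with `|v| = |w| ≠ 0`. Then there is a linear
isometry `R : ℝ^d → ℝ^d` with `Rv = w` and `|Rx − x| ≤ (|v−w|/|v|)|x|` for every `x`;
in particular, for every `r > 0`, `sup_{|x| ≤ r} |Rx − x| ≤ r |v−w|/|v|`. -/
theorem stmt19 {d : ℕ} (v w : EuclideanSpace ℝ (Fin d))
    (hvw : ‖v‖ = ‖w‖) (hv : v ≠ 0) :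
    ∃ R : EuclideanSpace ℝ (Fin d) →ₗᵢ[ℝ] EuclideanSpace ℝ (Fin d),
      R v = w ∧
      (∀ x, ‖R x - x‖ ≤ (‖v - w‖ / ‖v‖) * ‖x‖) ∧
      ∀ r > 0, ∀ x, ‖x‖ ≤ r → ‖R x - x‖ ≤ r * ‖v - w‖ / ‖v‖ := by
  have hnv : (0:ℝ) < ‖v‖ := norm_pos_iff.mpr hv
  suffices h : ∃ R : EuclideanSpace ℝ (Fin d) →ₗᵢ[ℝ] EuclideanSpace ℝ (Fin d),
      R v = w ∧ ∀ x, ‖R x - x‖ ≤ (‖v - w‖ / ‖v‖) * ‖x‖ by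
    obtain ⟨R, h1, h2⟩ := h
    refine ⟨R, h1, h2, fun r hr x hx => ?_⟩
    calc ‖R x - x‖ ≤ (‖v - w‖ / ‖v‖) * ‖x‖ := h2 x
      _ ≤ (‖v - w‖ / ‖v‖) * r :=
        mul_le_mul_of_nonneg_left hx (div_nonneg (norm_nonneg _) (norm_nonneg _))
      _ = r * ‖v - w‖ / ‖v‖ := by ring
  set e : EuclideanSpace ℝ (Fin d) := ‖v‖⁻¹ • v with hedef
  have he : ‖e‖ = 1 := by
    rw [hedef, norm_smul, norm_inv, norm_norm, inv_mul_cancel₀ hnv.ne']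
  have hee : ⟪e, e⟫ = 1 := by rw [real_inner_self_eq_norm_sq, he]; norm_num
  have hev : ⟪e, v⟫ = ‖v‖ := by
    rw [hedef, real_inner_smul_left, real_inner_self_eq_norm_sq]
    field_simp
  have hve : v = ‖v‖ • e := by
    rw [hedef, smul_smul, mul_inv_cancel₀ hnv.ne', one_smul]
  set a : ℝ := ⟪e, w⟫ with hadef
  have hvwa : ⟪v, w⟫ = ‖v‖ * a := by
    rw [hadef, hedef, real_inner_smul_left]
    field_simp
  set u : EuclideanSpace ℝ (Fin d) := w - a • e with hudef
  have heu : ⟪e, u⟫ = 0 := by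
    rw [hudef, inner_sub_right, real_inner_smul_right, hee]
    ring
  by_cases hu : u = 0
  · -- w is parallel to v
    have hw : w = a • e := by rwa [hudef, sub_eq_zero] at hu
    have ha2 : a ^ 2 = ‖v‖ ^ 2 := by
      have h1 : ‖w‖ = |a| := by rw [hw, norm_smul, he, mul_one, Real.norm_eq_abs]
      rw [← sq_abs, ← h1, hvw]
    have : (a - ‖v‖) * (a + ‖v‖) = 0 := by linear_combination ha2
    rcases mul_eq_zero.mp this with h | h
    · -- a = ‖v‖, so w = v
      have hwv : w = v := by
        rw [hw, hve, sub_eq_zero.mp h]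
      refine ⟨LinearIsometry.id, by simp [hwv], fun x => ?_⟩
      simp only [LinearIsometry.id_apply, sub_self, norm_zero]
      positivity
    · -- a = -‖v‖, so w = -v
      have hwv : w = -v := by
        rw [hw, hve, show a = -‖v‖ by linarith, neg_smul]
      refine ⟨(LinearIsometryEquiv.neg ℝ).toLinearIsometry, by simp [hwv], fun x => ?_⟩
      have h1 : ‖v - w‖ = 2 * ‖v‖ := by
        rw [hwv, sub_neg_eq_add, show v + v = (2:ℝ) • v by module, norm_smul]
        norm_num
      have h2 : (LinearIsometryEquiv.neg ℝ).toLinearIsometry x - x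
          = -((2:ℝ) • x) := by
        simp only [LinearIsometryEquiv.coe_toLinearIsometry, LinearIsometryEquiv.coe_neg]
        module
      rw [h2, norm_neg, norm_smul, h1, Real.norm_eq_abs,
        show 2 * ‖v‖ / ‖v‖ = 2 by field_simp]
      norm_num
  · -- generic case: rotate in the plane spanned by e and u
    have hnu : (0:ℝ) < ‖u‖ := norm_pos_iff.mpr hu
    set f : EuclideanSpace ℝ (Fin d) := ‖u‖⁻¹ • u with hfdef
    have hf : ‖f‖ = 1 := by
      rw [hfdef, norm_smul, norm_inv, norm_norm, inv_mul_cancel₀ hnu.ne']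
    have hff : ⟪f, f⟫ = 1 := by rw [real_inner_self_eq_norm_sq, hf]; norm_num
    have hef : ⟪e, f⟫ = 0 := by
      rw [hfdef, real_inner_smul_right, heu, mul_zero]
    set c : ℝ := a / ‖v‖ with hcdef
    set s : ℝ := ‖u‖ / ‖v‖ with hsdef
    have hwe : ⟪w, e⟫ = a := real_inner_comm e w
    have hu2 : ‖u‖ ^ 2 + a ^ 2 = ‖v‖ ^ 2 := by
      have h1 : ⟪u, u⟫ = ‖w‖ ^ 2 - a ^ 2 := by
        rw [hudef]
        simp only [inner_sub_left, inner_sub_right, real_inner_smul_left, real_inner_smul_right,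
          hee, hwe, ← hadef]
        rw [real_inner_self_eq_norm_sq]
        ring
      rw [← real_inner_self_eq_norm_sq, h1, hvw]
      ring
    have hcs : c ^ 2 + s ^ 2 = 1 := by
      rw [hcdef, hsdef, div_pow, div_pow, ← add_div,
        show a ^ 2 + ‖u‖ ^ 2 = ‖v‖ ^ 2 by linarith]
      exact div_self (by positivity)
    obtain ⟨R, hR⟩ := rot_exists e f he hf hef c s hcs
    have hfv : ⟪f, v⟫ = 0 := by
      rw [hfdef, real_inner_smul_left, hudef, inner_sub_left, real_inner_smul_left, hev,
        real_inner_comm v w, hvwa]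
      ring
    refine ⟨R, ?_, fun x => ?_⟩
    · have hc1 : (c - 1) * ‖v‖ - s * 0 = a - ‖v‖ := by
        rw [hcdef]; field_simp; ring
      have hs1 : s * ‖v‖ + (c - 1) * 0 = ‖u‖ := by
        rw [hsdef]; field_simp; ring
      have h5 : ‖u‖ • f = u := by
        rw [hfdef, smul_smul, mul_inv_cancel₀ hnu.ne', one_smul]
      rw [hR v, hev, hfv, hc1, hs1, h5]
      rw [sub_smul, ← hve, hudef]
      abel
    · -- the bound
      set p : ℝ := ⟪e, x⟫ with hpdef
      set q : ℝ := ⟪f, x⟫ with hqdef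
      have hfe : ⟪f, e⟫ = 0 := by rw [real_inner_comm]; exact hef
      have hdiff : R x - x = ((c - 1) * p - s * q) • e + (s * p + (c - 1) * q) • f := by
        rw [hR]; module
      have hnorm2 : ‖R x - x‖ ^ 2 = (2 - 2 * c) * (p ^ 2 + q ^ 2) := by
        rw [hdiff, ← real_inner_self_eq_norm_sq]
        simp only [inner_add_left, inner_add_right, real_inner_smul_left, real_inner_smul_right,
          hee, hff, hef, hfe]
        linear_combination (p ^ 2 + q ^ 2) * hcs
      have hbessel : p ^ 2 + q ^ 2 ≤ ‖x‖ ^ 2 := by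
        have h0 : (0:ℝ) ≤ ⟪x - p • e - q • f, x - p • e - q • f⟫ := real_inner_self_nonneg
        have h1 : ⟪x - p • e - q • f, x - p • e - q • f⟫ = ⟪x, x⟫ - p ^ 2 - q ^ 2 := by
          simp only [inner_sub_left, inner_sub_right, real_inner_smul_left,
            real_inner_smul_right, hee, hff, hef, hfe]
          simp only [real_inner_comm e x, real_inner_comm f x, ← hpdef, ← hqdef]
          ring
        rw [h1, real_inner_self_eq_norm_sq] at h0
        linarith
      have hcle : 2 - 2 * c ≥ 0 := by
        have h1 : c ^ 2 ≤ 1 ^ 2 := by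
          simp only [one_pow]
          linarith [sq_nonneg s, hcs]
        have h2 : |c| ≤ 1 := by
          calc |c| = Real.sqrt (c ^ 2) := (Real.sqrt_sq_eq_abs c).symm
            _ ≤ Real.sqrt (1 ^ 2) := Real.sqrt_le_sqrt h1
            _ = 1 := by rw [one_pow, Real.sqrt_one]
        have h3 : c ≤ 1 := le_trans (le_abs_self c) h2
        linarith
      have hvw2 : ‖v - w‖ ^ 2 = (2 - 2 * c) * ‖v‖ ^ 2 := by
        have h1 : ⟪v - w, v - w⟫ = ‖v‖ ^ 2 - 2 * (‖v‖ * a) + ‖w‖ ^ 2 := by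
          simp only [inner_sub_left, inner_sub_right]
          rw [real_inner_comm v w, hvwa, real_inner_self_eq_norm_sq,
            real_inner_self_eq_norm_sq]
          ring
        have h2 : a = c * ‖v‖ := by rw [hcdef]; field_simp
        rw [← real_inner_self_eq_norm_sq, h1, ← hvw, h2]
        ring
      have hsq : ‖R x - x‖ ^ 2 ≤ ((‖v - w‖ / ‖v‖) * ‖x‖) ^ 2 := by
        rw [hnorm2, div_mul_eq_mul_div, div_pow, mul_pow, hvw2]
        rw [le_div_iff₀ (by positivity)]
        calc (2 - 2 * c) * (p ^ 2 + q ^ 2) * ‖v‖ ^ 2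
            ≤ (2 - 2 * c) * ‖x‖ ^ 2 * ‖v‖ ^ 2 :=
              mul_le_mul_of_nonneg_right (mul_le_mul_of_nonneg_left hbessel hcle) (sq_nonneg _)
          _ = (2 - 2 * c) * ‖v‖ ^ 2 * ‖x‖ ^ 2 := by ring
      calc ‖R x - x‖ = Real.sqrt (‖R x - x‖ ^ 2) := (Real.sqrt_sq (norm_nonneg _)).symm
        _ ≤ Real.sqrt (((‖v - w‖ / ‖v‖) * ‖x‖) ^ 2) := Real.sqrt_le_sqrt hsq
        _ = (‖v - w‖ / ‖v‖) * ‖x‖ := Real.sqrt_sq (by positivity)
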